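/- Let f, g : I → ℝ be strictly increasing and n ≥ 2. If A_{f₊}^{[n]}(x) ≤ A_{g₋}^{[n]}(x) for all x ∈ Iⁿ, then f and g are both continuous on I. -/

import Mathlib

open Set Filter Topology

/-- `finv` is the generalized inverse of the strictly increasing function `f : I → ℝ`:
an increasing continuous left inverse of `f` mapping `conv (f '' I)` into `I`. -/
def IsGenInv (I : Set ℝ) (f finv : ℝ → ℝ) : Prop :=
  MonotoneOn finv (convexHull ℝ (f '' I)) ∧
  ContinuousOn finv (convexHull ℝ (f '' I)) ∧
  Set.MapsTo finv (convexHull ℝ (f '' I)) I ∧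
  ∀ x ∈ I, finv (f x) = x

/-- The `n`-variable generalized quasiarithmetic mean `A_f^{[n]}` generated by `f`,
where `finv` is the generalized inverse of `f`. -/
noncomputable def qam (finv f : ℝ → ℝ) (n : ℕ) (x : Fin n → ℝ) : ℝ :=
  finv ((∑ i, f (x i)) / n)

set_option maxHeartbeats 1600000 in
/-- if `A_{f₊}^{[n]} ≤ A_{g₋}^{[n]}` on `Iⁿ` for some `n ≥ 2`, then `f` and
`g` are continuous on `I`. (The generalized inverses of `f₊` and `f`, resp. of `g₋` and
`g`, coincide.) -/
theorem stmt18 (I : Set ℝ) (hIo : IsOpen I) (hIc : I.OrdConnected) (hne : I.Nonempty)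
    (f g fp gm finvf finvg : ℝ → ℝ)
    (hf : StrictMonoOn f I) (hg : StrictMonoOn g I)
    (hfp : ∀ x ∈ I, Tendsto f (𝓝[>] x) (𝓝 (fp x)))
    (hgm : ∀ x ∈ I, Tendsto g (𝓝[<] x) (𝓝 (gm x)))
    (hinvf : IsGenInv I f finvf) (hinvg : IsGenInv I g finvg)
    (n : ℕ) (hn : 2 ≤ n)
    (hcomp : ∀ x : Fin n → ℝ, (∀ i, x i ∈ I) → qam finvf fp n x ≤ qam finvg gm n x) :
    ContinuousOn f I ∧ ContinuousOn g I := by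
  haveI : NeZero n := ⟨by omega⟩
  have hn2 : (2:ℝ) ≤ (n:ℝ) := by exact_mod_cast hn
  have hn0 : (0:ℝ) < (n:ℝ) := by linarith
  have hn1 : (0:ℝ) < (n:ℝ) - 1 := by linarith
  -- points of I on both sides
  have exists_lt : ∀ t ∈ I, ∃ s ∈ I, s < t := by
    intro t ht
    obtain ⟨ε, hε, hball⟩ := Metric.isOpen_iff.1 hIo t ht
    refine ⟨t - ε/2, hball ?_, by linarith⟩
    rw [Metric.mem_ball, Real.dist_eq, show t - ε/2 - t = -(ε/2) by ring, abs_neg,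
      abs_of_nonneg (by linarith)]
    linarith
  have exists_gt : ∀ t ∈ I, ∃ s ∈ I, t < s := by
    intro t ht
    obtain ⟨ε, hε, hball⟩ := Metric.isOpen_iff.1 hIo t ht
    refine ⟨t + ε/2, hball ?_, by linarith⟩
    rw [Metric.mem_ball, Real.dist_eq, show t + ε/2 - t = ε/2 by ring,
      abs_of_nonneg (by linarith)]
    linarith
  have hIcc : ∀ {a b : ℝ}, a ∈ I → b ∈ I → Icc a b ⊆ I := fun ha hb => hIc.out ha hb
  -- eventually in I
  have evI_gt : ∀ t ∈ I, ∀ᶠ u in 𝓝[>] t, u ∈ I := fun t ht =>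
    eventually_nhdsWithin_of_eventually_nhds (hIo.mem_nhds ht)
  have evI_lt : ∀ t ∈ I, ∀ᶠ u in 𝓝[<] t, u ∈ I := fun t ht =>
    eventually_nhdsWithin_of_eventually_nhds (hIo.mem_nhds ht)
  -- basic bounds on fp, gm
  have hf_le_fp : ∀ t ∈ I, f t ≤ fp t := by
    intro t ht
    refine ge_of_tendsto (hfp t ht) ?_
    filter_upwards [evI_gt t ht, self_mem_nhdsWithin] with u huI hut
    exact (hf ht huI hut).le
  have fp_le : ∀ t ∈ I, ∀ s ∈ I, t < s → fp t ≤ f s := by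
    intro t ht s hs hts
    refine le_of_tendsto (hfp t ht) ?_
    filter_upwards [evI_gt t ht, Ioo_mem_nhdsGT_of_mem (show t ∈ Ico t s from ⟨le_refl t, hts⟩)]
      with u huI hu
    exact (hf huI hs hu.2).le
  have gm_le : ∀ t ∈ I, gm t ≤ g t := by
    intro t ht
    refine le_of_tendsto (hgm t ht) ?_
    filter_upwards [evI_lt t ht, self_mem_nhdsWithin] with u huI hut
    exact (hg huI ht hut).le
  have le_gm : ∀ t ∈ I, ∀ s ∈ I, s < t → g s ≤ gm t := by
    intro t ht s hs hst
    refine ge_of_tendsto (hgm t ht) ?_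
    filter_upwards [evI_lt t ht, Ioo_mem_nhdsLT_of_mem (show t ∈ Ioc s t from ⟨hst, le_refl t⟩)]
      with u huI hu
    exact (hg hs huI hu.1).le
  -- hull facts
  have hHfc : Convex ℝ (convexHull ℝ (f '' I)) := convex_convexHull ℝ _
  have hHgc : Convex ℝ (convexHull ℝ (g '' I)) := convex_convexHull ℝ _
  have hfmem : ∀ t ∈ I, f t ∈ convexHull ℝ (f '' I) := fun t ht =>
    subset_convexHull ℝ _ ⟨t, ht, rfl⟩
  have hgmem : ∀ t ∈ I, g t ∈ convexHull ℝ (g '' I) := fun t ht =>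
    subset_convexHull ℝ _ ⟨t, ht, rfl⟩
  have fp_mem : ∀ t ∈ I, fp t ∈ convexHull ℝ (f '' I) := by
    intro t ht
    obtain ⟨y, hyI, hty⟩ := exists_gt t ht
    exact hHfc.ordConnected.out (hfmem t ht) (hfmem y hyI)
      ⟨hf_le_fp t ht, fp_le t ht y hyI hty⟩
  have gm_mem : ∀ t ∈ I, gm t ∈ convexHull ℝ (g '' I) := by
    intro t ht
    obtain ⟨y, hyI, hyt⟩ := exists_lt t ht
    exact hHgc.ordConnected.out (hgmem y hyI) (hgmem t ht)
      ⟨le_gm t ht y hyI hyt, gm_le t ht⟩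
  have mem_avg : ∀ (S : Set ℝ), ∀ a ∈ convexHull ℝ S, ∀ b ∈ convexHull ℝ S,
      (a + ((n:ℝ) - 1) * b) / n ∈ convexHull ℝ S := by
    intro S a ha b hb
    have h1 : (0:ℝ) ≤ 1/(n:ℝ) := by positivity
    have h2 : (0:ℝ) ≤ ((n:ℝ)-1)/(n:ℝ) := by
      apply div_nonneg <;> linarith
    have h3 : 1/(n:ℝ) + ((n:ℝ)-1)/(n:ℝ) = 1 := by field_simp; ring
    have := (convex_convexHull ℝ S) ha hb h1 h2 h3
    have heq : (1/(n:ℝ)) • a + (((n:ℝ)-1)/(n:ℝ)) • b = (a + ((n:ℝ) - 1) * b) / n := by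
      simp only [smul_eq_mul]
      field_simp
    rwa [heq] at this
  -- the two-point specialization of hcomp
  have sum_eq : ∀ (h : ℝ → ℝ) (a b : ℝ),
      (∑ i : Fin n, h (if i = (0 : Fin n) then a else b)) = h a + ((n:ℝ) - 1) * h b := by
    intro h a b
    have h1 : ∀ i : Fin n, h (if i = (0:Fin n) then a else b)
        = h b + (if i = (0:Fin n) then h a - h b else 0) := by
      intro i; by_cases hi : i = 0 <;> simp [hi]
    rw [Finset.sum_congr rfl fun i _ => h1 i, Finset.sum_add_distrib, Finset.sum_const,
      Finset.sum_ite_eq' Finset.univ (0:Fin n) (fun _ => h a - h b)]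
    simp only [Finset.card_univ, Fintype.card_fin, Finset.mem_univ, if_true, nsmul_eq_mul]
    ring
  have key : ∀ t ∈ I, ∀ w ∈ I,
      finvf ((fp t + ((n:ℝ) - 1) * fp w) / n) ≤ finvg ((gm t + ((n:ℝ) - 1) * gm w) / n) := by
    intro t ht w hw
    have hx : ∀ i : Fin n, (if i = (0:Fin n) then t else w) ∈ I := by
      intro i; by_cases hi : i = 0 <;> simp [hi, ht, hw]
    have H := hcomp (fun i => if i = (0:Fin n) then t else w) hx
    simp only [qam] at H
    rwa [sum_eq fp t w, sum_eq gm t w] at H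
  -- Lemma A : no jump for f
  have lemA : ∀ t ∈ I, fp t ≤ sSup (f '' (I ∩ Iio t)) := by
    intro t ht
    by_contra hcon
    push_neg at hcon
    obtain ⟨s₁, hs₁I, hs₁t⟩ := exists_lt t ht
    have hSne : (f '' (I ∩ Iio t)).Nonempty := ⟨f s₁, s₁, ⟨hs₁I, hs₁t⟩, rfl⟩
    have hSbdd : BddAbove (f '' (I ∩ Iio t)) := by
      refine ⟨f t, ?_⟩
      rintro y ⟨s, ⟨hsI, hst⟩, rfl⟩
      exact (hf hsI ht hst).le
    set Fm := sSup (f '' (I ∩ Iio t)) with hFm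
    set J := fp t - Fm with hJdef
    have hJ : 0 < J := by simp only [hJdef]; linarith
    -- choose w
    obtain ⟨y, hy, hwgt⟩ := exists_lt_of_lt_csSup hSne
      (show Fm - J/((n:ℝ)-1) < Fm by
        have : 0 < J/((n:ℝ)-1) := by positivity
        linarith)
    obtain ⟨w, ⟨hwI, hwt'⟩, rfl⟩ := hy
    have hwt : w < t := hwt'
    -- midpoint s₀ ∈ (w, t)
    have hs₀I : (w + t)/2 ∈ I := hIcc hwI ht ⟨by linarith, by linarith⟩
    set s₀ := (w + t)/2 with hs₀def
    have hws₀ : w < s₀ := by simp only [hs₀def]; linarith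
    have hs₀t : s₀ < t := by simp only [hs₀def]; linarith
    -- rhs argument
    set Rarg := (gm t + ((n:ℝ) - 1) * gm w) / n with hRdef
    have hgmw : gm w < gm t :=
      lt_of_le_of_lt (gm_le w hwI)
        (lt_of_lt_of_le (hg hwI hs₀I hws₀) (le_gm t ht s₀ hs₀I hs₀t))
    have hRlt : Rarg < gm t := by
      rw [hRdef, div_lt_iff₀ hn0]
      nlinarith
    -- choose σ ∈ (w, t) ∩ I with g σ > Rarg
    have hev : ∀ᶠ u in 𝓝[<] t, Rarg < g u ∧ u ∈ I ∧ u ∈ Ioo w t := by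
      filter_upwards [(hgm t ht).eventually_const_lt hRlt, evI_lt t ht,
        Ioo_mem_nhdsLT_of_mem (show t ∈ Ioc w t from ⟨hwt, le_refl t⟩)] with u h1 h2 h3
      exact ⟨h1, h2, h3⟩
    obtain ⟨σ, hσR, hσI, hwσ, hσt⟩ := hev.exists
    -- σ' ∈ (σ, t)
    set σ' := (σ + t)/2 with hσ'def
    have hσ'I : σ' ∈ I := hIcc hσI ht ⟨by simp only [hσ'def]; linarith, by simp only [hσ'def]; linarith⟩
    have hσσ' : σ < σ' := by simp only [hσ'def]; linarith
    have hσ't : σ' < t := by simp only [hσ'def]; linarith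
    have hfσ' : f σ' ≤ Fm := le_csSup hSbdd ⟨σ', ⟨hσ'I, hσ't⟩, rfl⟩
    -- lhs argument
    set Larg := (fp t + ((n:ℝ) - 1) * fp w) / n with hLdef
    have hfpw : Fm - J/((n:ℝ)-1) < fp w := lt_of_lt_of_le hwgt (hf_le_fp w hwI)
    have hL : Fm < Larg := by
      rw [hLdef, lt_div_iff₀ hn0]
      have h4 : ((n:ℝ)-1) * (Fm - J/((n:ℝ)-1)) < ((n:ℝ)-1) * fp w :=
        mul_lt_mul_of_pos_left hfpw hn1
      have h5 : ((n:ℝ)-1) * (Fm - J/((n:ℝ)-1)) = ((n:ℝ)-1)*Fm - J := by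
        field_simp
      have h6 : fp t = Fm + J := by simp only [hJdef]; ring
      nlinarith
    have main := key t ht w hwI
    have hLmem : Larg ∈ convexHull ℝ (f '' I) := mem_avg _ _ (fp_mem t ht) _ (fp_mem w hwI)
    have hRmem : Rarg ∈ convexHull ℝ (g '' I) := mem_avg _ _ (gm_mem t ht) _ (gm_mem w hwI)
    have hL2 : σ' ≤ finvf Larg := by
      have := hinvf.1 (hfmem σ' hσ'I) hLmem (le_of_lt (lt_of_le_of_lt hfσ' hL))
      rwa [hinvf.2.2.2 σ' hσ'I] at this
    have hR2 : finvg Rarg ≤ σ := by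
      have := hinvg.1 hRmem (hgmem σ hσI) hσR.le
      rwa [hinvg.2.2.2 σ hσI] at this
    linarith
  -- Lemma B : no jump for g
  have lemB : ∀ t ∈ I, sInf (g '' (I ∩ Ioi t)) ≤ gm t := by
    intro t ht
    by_contra hcon
    push_neg at hcon
    obtain ⟨s₁, hs₁I, hs₁t⟩ := exists_gt t ht
    have hSne : (g '' (I ∩ Ioi t)).Nonempty := ⟨g s₁, s₁, ⟨hs₁I, hs₁t⟩, rfl⟩
    have hSbdd : BddBelow (g '' (I ∩ Ioi t)) := by
      refine ⟨g t, ?_⟩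
      rintro y ⟨s, ⟨hsI, hst⟩, rfl⟩
      exact (hg ht hsI hst).le
    set Gp := sInf (g '' (I ∩ Ioi t)) with hGp
    set J := Gp - gm t with hJdef
    have hJ : 0 < J := by simp only [hJdef]; linarith
    -- choose w
    obtain ⟨y, hy, hwlt⟩ := exists_lt_of_csInf_lt hSne
      (show Gp < Gp + J/((n:ℝ)-1) by
        have : 0 < J/((n:ℝ)-1) := by positivity
        linarith)
    obtain ⟨w, ⟨hwI, htw'⟩, rfl⟩ := hy
    have htw : t < w := htw'
    -- midpoint s₀ ∈ (t, w)
    have hs₀I : (t + w)/2 ∈ I := hIcc ht hwI ⟨by linarith, by linarith⟩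
    set s₀ := (t + w)/2 with hs₀def
    have hts₀ : t < s₀ := by simp only [hs₀def]; linarith
    have hs₀w : s₀ < w := by simp only [hs₀def]; linarith
    -- rhs argument
    set Rarg := (gm t + ((n:ℝ) - 1) * gm w) / n with hRdef
    have hgmw : gm w < Gp + J/((n:ℝ)-1) := lt_of_le_of_lt (gm_le w hwI) hwlt
    have hRlt : Rarg < Gp := by
      rw [hRdef, div_lt_iff₀ hn0]
      have h4 : ((n:ℝ)-1) * gm w < ((n:ℝ)-1) * (Gp + J/((n:ℝ)-1)) :=
        mul_lt_mul_of_pos_left hgmw hn1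
      have h5 : ((n:ℝ)-1) * (Gp + J/((n:ℝ)-1)) = ((n:ℝ)-1)*Gp + J := by
        field_simp
      have h6 : gm t = Gp - J := by simp only [hJdef]; ring
      nlinarith
    -- lhs argument
    set Larg := (fp t + ((n:ℝ) - 1) * fp w) / n with hLdef
    have hfpw : fp t < fp w :=
      lt_of_le_of_lt (fp_le t ht s₀ hs₀I hts₀)
        (lt_of_lt_of_le (hf hs₀I hwI hs₀w) (hf_le_fp w hwI))
    have hL : fp t < Larg := by
      rw [hLdef, lt_div_iff₀ hn0]
      nlinarith
    -- choose σ ∈ (t, w) ∩ I with f σ < Larg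
    have hev : ∀ᶠ u in 𝓝[>] t, f u < Larg ∧ u ∈ I ∧ u ∈ Ioo t w := by
      filter_upwards [(hfp t ht).eventually_lt_const hL, evI_gt t ht,
        Ioo_mem_nhdsGT_of_mem (show t ∈ Ico t w from ⟨le_refl t, htw⟩)] with u h1 h2 h3
      exact ⟨h1, h2, h3⟩
    obtain ⟨σ, hσL, hσI, htσ, hσw⟩ := hev.exists
    -- σ'' ∈ (t, σ)
    set σ'' := (t + σ)/2 with hσ''def
    have hσ''I : σ'' ∈ I := hIcc ht hσI ⟨by simp only [hσ''def]; linarith, by simp only [hσ''def]; linarith⟩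
    have htσ'' : t < σ'' := by simp only [hσ''def]; linarith
    have hσ''σ : σ'' < σ := by simp only [hσ''def]; linarith
    have hgσ'' : Gp ≤ g σ'' := csInf_le hSbdd ⟨σ'', ⟨hσ''I, htσ''⟩, rfl⟩
    have main := key t ht w hwI
    have hLmem : Larg ∈ convexHull ℝ (f '' I) := mem_avg _ _ (fp_mem t ht) _ (fp_mem w hwI)
    have hRmem : Rarg ∈ convexHull ℝ (g '' I) := mem_avg _ _ (gm_mem t ht) _ (gm_mem w hwI)
    have hL2 : σ ≤ finvf Larg := by
      have := hinvf.1 (hfmem σ hσI) hLmem hσL.le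
      rwa [hinvf.2.2.2 σ hσI] at this
    have hR2 : finvg Rarg ≤ σ'' := by
      have := hinvg.1 hRmem (hgmem σ'' hσ''I) (le_of_lt (lt_of_lt_of_le hRlt hgσ''))
      rwa [hinvg.2.2.2 σ'' hσ''I] at this
    linarith
  constructor
  · -- continuity of f
    intro t ht
    apply ContinuousAt.continuousWithinAt
    obtain ⟨s₁, hs₁I, hs₁t⟩ := exists_lt t ht
    have hSne : (f '' (I ∩ Iio t)).Nonempty := ⟨f s₁, s₁, ⟨hs₁I, hs₁t⟩, rfl⟩
    have hSle : sSup (f '' (I ∩ Iio t)) ≤ f t := by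
      apply csSup_le hSne
      rintro y ⟨s, ⟨hsI, hst⟩, rfl⟩
      exact (hf hsI ht hst).le
    have hfpt : fp t = f t := le_antisymm (le_trans (lemA t ht) hSle) (hf_le_fp t ht)
    have hFsup : sSup (f '' (I ∩ Iio t)) = f t :=
      le_antisymm hSle (le_trans (hf_le_fp t ht) (lemA t ht))
    rw [Metric.continuousAt_iff]
    intro ε hε
    -- point below
    obtain ⟨y, hy, hsgt⟩ := exists_lt_of_lt_csSup hSne
      (show f t - ε < sSup (f '' (I ∩ Iio t)) by rw [hFsup]; linarith)
    obtain ⟨s, ⟨hsI, hst'⟩, rfl⟩ := hy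
    have hst : s < t := hst'
    -- point above
    have hev : ∀ᶠ u in 𝓝[>] t, f u < f t + ε ∧ u ∈ I ∧ t < u := by
      filter_upwards [(hfp t ht).eventually_lt_const (show fp t < f t + ε by rw [hfpt]; linarith),
        evI_gt t ht, self_mem_nhdsWithin] with u h1 h2 h3
      exact ⟨h1, h2, h3⟩
    obtain ⟨s', hs'lt, hs'I, hts'⟩ := hev.exists
    have hts'2 : t < s' := hts'
    refine ⟨min (t - s) (s' - t), by apply lt_min <;> linarith, ?_⟩
    intro u hu
    rw [Real.dist_eq] at hu
    have hu1 : s < u := by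
      have := abs_lt.1 (lt_of_lt_of_le hu (min_le_left _ _))
      linarith [this.1]
    have hu2 : u < s' := by
      have := abs_lt.1 (lt_of_lt_of_le hu (min_le_right _ _))
      linarith [this.2]
    have huI : u ∈ I := hIcc hsI hs'I ⟨hu1.le, hu2.le⟩
    have hmo : MonotoneOn f I := hf.monotoneOn
    have hb1 : f s ≤ f u := hmo hsI huI hu1.le
    have hb2 : f u ≤ f s' := hmo huI hs'I hu2.le
    rw [Real.dist_eq, abs_lt]
    constructor <;> linarith
  · -- continuity of g
    intro t ht
    apply ContinuousAt.continuousWithinAt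
    obtain ⟨s₁, hs₁I, hs₁t⟩ := exists_gt t ht
    have hSne : (g '' (I ∩ Ioi t)).Nonempty := ⟨g s₁, s₁, ⟨hs₁I, hs₁t⟩, rfl⟩
    have hSle : g t ≤ sInf (g '' (I ∩ Ioi t)) := by
      apply le_csInf hSne
      rintro y ⟨s, ⟨hsI, hst⟩, rfl⟩
      exact (hg ht hsI hst).le
    have hgmt : gm t = g t := le_antisymm (gm_le t ht) (le_trans hSle (lemB t ht))
    have hGinf : sInf (g '' (I ∩ Ioi t)) = g t :=
      le_antisymm (le_trans (lemB t ht) (gm_le t ht)) hSle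
    rw [Metric.continuousAt_iff]
    intro ε hε
    -- point above
    obtain ⟨y, hy, hslt⟩ := exists_lt_of_csInf_lt hSne
      (show sInf (g '' (I ∩ Ioi t)) < g t + ε by rw [hGinf]; linarith)
    obtain ⟨s', ⟨hs'I, hts''⟩, rfl⟩ := hy
    have hts' : t < s' := hts''
    -- point below
    have hev : ∀ᶠ u in 𝓝[<] t, g t - ε < g u ∧ u ∈ I ∧ u < t := by
      filter_upwards [(hgm t ht).eventually_const_lt (show g t - ε < gm t by rw [hgmt]; linarith),
        evI_lt t ht, self_mem_nhdsWithin] with u h1 h2 h3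
      exact ⟨h1, h2, h3⟩
    obtain ⟨s, hsgt, hsI, hst⟩ := hev.exists
    have hst2 : s < t := hst
    refine ⟨min (t - s) (s' - t), by apply lt_min <;> linarith, ?_⟩
    intro u hu
    rw [Real.dist_eq] at hu
    have hu1 : s < u := by
      have := abs_lt.1 (lt_of_lt_of_le hu (min_le_left _ _))
      linarith [this.1]
    have hu2 : u < s' := by
      have := abs_lt.1 (lt_of_lt_of_le hu (min_le_right _ _))
      linarith [this.2]
    have huI : u ∈ I := hIcc hsI hs'I ⟨hu1.le, hu2.le⟩
    have hmo : MonotoneOn g I := hg.monotoneOn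
    have hb1 : g s ≤ g u := hmo hsI huI hu1.le
    have hb2 : g u ≤ g s' := hmo huI hs'I hu2.le
    rw [Real.dist_eq, abs_lt]
    constructor <;> linarith
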